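/- The number of staircase tableaux of size n (with fillings from {α, β, γ, δ}) is 4^n · n!. -/

import Mathlib

def IsStaircase (n : ℕ) (f : Fin n × Fin n → Option (Fin 4)) : Prop :=
  (∀ p : Fin n × Fin n, n ≤ (p.1 : ℕ) + (p.2 : ℕ) → f p = none) ∧
  (∀ p : Fin n × Fin n, (p.1 : ℕ) + (p.2 : ℕ) = n - 1 → f p ≠ none) ∧
  (∀ p : Fin n × Fin n, (f p = some 1 ∨ f p = some 3) →
    ∀ j' : Fin n, j' < p.2 → f (p.1, j') = none) ∧
  (∀ p : Fin n × Fin n, (f p = some 0 ∨ f p = some 2) →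
    ∀ i' : Fin n, i' < p.1 → f (i', p.2) = none)

instance (n : ℕ) : DecidablePred (IsStaircase n) := fun _ => by
  unfold IsStaircase; infer_instance

namespace SP

/-! ### ℕ-valued accessors -/

def FN (N : ℕ) (f : Fin N × Fin N → Option (Fin 4)) : ℕ → ℕ → Option (Fin 4) :=
  fun i j => if h : i < N ∧ j < N then f (⟨i, h.1⟩, ⟨j, h.2⟩) else none

def GN (N x : ℕ) (g : Fin N → Fin x) : ℕ → ℕ :=
  fun j => if h : j < N then (g ⟨j, h⟩ : ℕ) else 0

lemma FN_eval (N : ℕ) (f : Fin N × Fin N → Option (Fin 4)) (p : Fin N × Fin N) :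
    FN N f (p.1 : ℕ) (p.2 : ℕ) = f p := by
  unfold FN
  rw [dif_pos ⟨p.1.2, p.2.2⟩]

lemma FN_bounds {N : ℕ} {f : Fin N × Fin N → Option (Fin 4)} {i j : ℕ}
    (h : FN N f i j ≠ none) : i < N ∧ j < N := by
  by_contra hc
  exact h (by unfold FN; rw [dif_neg hc])

lemma FN_bounds' {N : ℕ} {f : Fin N × Fin N → Option (Fin 4)} {i j : ℕ}
    (v : Fin 4) (h : FN N f i j = some v) : i < N ∧ j < N := by
  apply FN_bounds; rw [h]; simp

lemma ofin4 (o : Option (Fin 4)) :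
    o = none ∨ o = some 0 ∨ o = some 1 ∨ o = some 2 ∨ o = some 3 := by
  rcases o with _ | v
  · exact Or.inl rfl
  · fin_cases v
    · exact Or.inr (Or.inl rfl)
    · exact Or.inr (Or.inr (Or.inl rfl))
    · exact Or.inr (Or.inr (Or.inr (Or.inl rfl)))
    · exact Or.inr (Or.inr (Or.inr (Or.inr rfl)))

lemma GN_lt {N x : ℕ} (hx : 0 < x) (g : Fin N → Fin x) (j : ℕ) : GN N x g j < x := by
  unfold GN; split
  · exact (g _).2
  · exact hx

lemma funext_of_FN {N : ℕ} {f₁ f₂ : Fin N × Fin N → Option (Fin 4)}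
    (h : ∀ i j, FN N f₁ i j = FN N f₂ i j) : f₁ = f₂ := by
  funext p
  rw [← FN_eval N f₁ p, ← FN_eval N f₂ p, h]

lemma funext_of_GN {N x : ℕ} {g₁ g₂ : Fin N → Fin x}
    (h : ∀ j, GN N x g₁ j = GN N x g₂ j) : g₁ = g₂ := by
  funext j
  have := h (j : ℕ)
  unfold GN at this
  rw [dif_pos j.2, dif_pos j.2] at this
  simpa [Fin.ext_iff] using this

/-- IsStaircase in terms of FN -/
lemma isStaircase_iff (N : ℕ) (f : Fin N × Fin N → Option (Fin 4)) :
    IsStaircase N f ↔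
      ((∀ i j : ℕ, N ≤ i + j → FN N f i j = none) ∧
       (∀ i j : ℕ, i < N → j < N → i + j = N - 1 → FN N f i j ≠ none) ∧
       (∀ i j j' : ℕ, (FN N f i j = some 1 ∨ FN N f i j = some 3) → j' < j →
          FN N f i j' = none) ∧
       (∀ i j i' : ℕ, (FN N f i j = some 0 ∨ FN N f i j = some 2) → i' < i →
          FN N f i' j = none)) := by
  constructor
  · rintro ⟨h1, h2, h3, h4⟩
    refine ⟨fun i j hij => ?_, fun i j hi hj hij => ?_, fun i j j' hl hj' => ?_,
      fun i j i' hl hi' => ?_⟩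
    · unfold FN; split
      · exact h1 _ hij
      · rfl
    · unfold FN; rw [dif_pos ⟨hi, hj⟩]; exact h2 (⟨i, hi⟩, ⟨j, hj⟩) hij
    · have hne : FN N f i j ≠ none := by rcases hl with hl | hl <;> simp [hl]
      obtain ⟨hi, hj⟩ := FN_bounds hne
      have hj'N : j' < N := lt_trans hj' hj
      rw [FN_eval N f (⟨i,hi⟩,⟨j,hj⟩)] at hl  -- may need adjusting
      have := h3 (⟨i,hi⟩,⟨j,hj⟩) hl ⟨j', hj'N⟩ hj'
      unfold FN; rw [dif_pos ⟨hi, hj'N⟩]; exact this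
    · have hne : FN N f i j ≠ none := by rcases hl with hl | hl <;> simp [hl]
      obtain ⟨hi, hj⟩ := FN_bounds hne
      have hi'N : i' < N := lt_trans hi' hi
      rw [FN_eval N f (⟨i,hi⟩,⟨j,hj⟩)] at hl
      have := h4 (⟨i,hi⟩,⟨j,hj⟩) hl ⟨i', hi'N⟩ hi'
      unfold FN; rw [dif_pos ⟨hi'N, hj⟩]; exact this
  · rintro ⟨h1, h2, h3, h4⟩
    refine ⟨fun p hp => ?_, fun p hp => ?_, fun p hl j' hj' => ?_, fun p hl i' hi' => ?_⟩
    · rw [← FN_eval N f p]; exact h1 _ _ hp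
    · rw [← FN_eval N f p]; exact h2 _ _ p.1.2 p.2.2 hp
    · rw [← FN_eval N f p] at hl
      have := h3 (p.1 : ℕ) (p.2 : ℕ) (j' : ℕ) hl hj'
      rw [← this]; rw [← FN_eval N f (p.1, j')]
    · rw [← FN_eval N f p] at hl
      have := h4 (p.1 : ℕ) (p.2 : ℕ) (i' : ℕ) hl hi'
      rw [← this]; rw [← FN_eval N f (i', p.2)]

/-! ### generalized staircase tableaux -/

def OK (x n : ℕ) (p : (Fin n × Fin n → Option (Fin 4)) × (Fin n → Fin x)) : Prop :=
  IsStaircase n p.1 ∧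
    ∀ j : Fin n, (∃ i : Fin n, p.1 (i, j) = some 0 ∨ p.1 (i, j) = some 2) → (p.2 j : ℕ) = 0

instance (x n : ℕ) : DecidablePred (OK x n) := fun _ => by
  unfold OK; infer_instance

lemma okcol_iff (N x : ℕ) (f : Fin N × Fin N → Option (Fin 4)) (g : Fin N → Fin x) :
    (∀ j : Fin N, (∃ i : Fin N, f (i, j) = some 0 ∨ f (i, j) = some 2) → (g j : ℕ) = 0) ↔
    (∀ i j : ℕ, (FN N f i j = some 0 ∨ FN N f i j = some 2) → GN N x g j = 0) := by
  constructor
  · intro h i j hl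
    have hne : FN N f i j ≠ none := by rcases hl with hl | hl <;> simp [hl]
    obtain ⟨hi, hj⟩ := FN_bounds hne
    rw [FN_eval N f (⟨i,hi⟩,⟨j,hj⟩)] at hl
    have := h ⟨j, hj⟩ ⟨⟨i, hi⟩, hl⟩
    unfold GN; rw [dif_pos hj]; exact this
  · intro h j ⟨i, hl⟩
    rw [← FN_eval N f (i, j)] at hl
    have := h (i : ℕ) (j : ℕ) hl
    unfold GN at this; rw [dif_pos j.2] at this; exact this

abbrev GS (x n : ℕ) := {p : (Fin n × Fin n → Option (Fin 4)) × (Fin n → Fin x) // OK x n p}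

/-! ### decode ingredients -/

section
variable (x n : ℕ)

/-- position of the special (leftmost filled) box of row 0, decoding side -/
def dm (g' : Fin n → Fin (x+3)) : ℕ :=
  Nat.find (⟨n, Or.inr rfl⟩ : ∃ k, x + 1 ≤ GN n (x+3) g' k ∨ k = n)

def dletter (c : ℕ) : Option (Fin 4) :=
  if c = 0 then some 0 else if c = 1 then some 2 else if c < x + 3 then some 1 else some 3

def dgc (c : ℕ) : ℕ := if c ≤ 1 then 0 else if c < x + 3 then c - 2 else c - (x + 3)

def drow (c : ℕ) (g' : Fin n → Fin (x+3)) : ℕ → Option (Fin 4) := fun j =>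
  if j = dm x n g' then dletter x c
  else if j = n then (if GN n (x+3) g' (dm x n g') = x + 1 then some 0 else some 2)
  else if GN n (x+3) g' j ≤ x then none
  else if GN n (x+3) g' j = x + 1 then some 0 else some 2

def dg0 (c : ℕ) (g' : Fin n → Fin (x+3)) : ℕ → ℕ := fun j =>
  if j = dm x n g' then dgc x c
  else if j = n then 0
  else if GN n (x+3) g' j ≤ x then GN n (x+3) g' j else 0

def df (c : ℕ) (f' : Fin n × Fin n → Option (Fin 4)) (g' : Fin n → Fin (x+3)) :
    Fin (n+1) × Fin (n+1) → Option (Fin 4) := fun p =>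
  if (p.1 : ℕ) = 0 then drow x n c g' (p.2 : ℕ)
  else FN n f' ((p.1 : ℕ) - 1) (p.2 : ℕ)

/-! ### encode ingredients -/

/-- position of leftmost filled box of row 0 -/
def em (f : Fin (n+1) × Fin (n+1) → Option (Fin 4)) : ℕ :=
  Nat.find (⟨n, Or.inr rfl⟩ : ∃ k, FN (n+1) f 0 k ≠ none ∨ k = n)

def ec (f : Fin (n+1) × Fin (n+1) → Option (Fin 4)) (g : Fin (n+1) → Fin (x+1)) : ℕ :=
  if FN (n+1) f 0 (em n f) = some 0 then 0
  else if FN (n+1) f 0 (em n f) = some 2 then 1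
  else if FN (n+1) f 0 (em n f) = some 1 then 2 + GN (n+1) (x+1) g (em n f)
  else if FN (n+1) f 0 (em n f) = some 3 then x + 3 + GN (n+1) (x+1) g (em n f)
  else 0

def eh (f : Fin (n+1) × Fin (n+1) → Option (Fin 4)) (g : Fin (n+1) → Fin (x+1)) : ℕ → ℕ :=
  fun j =>
  if j = em n f then
    (if FN (n+1) f 0 n = some 0 then x + 1 else if FN (n+1) f 0 n = some 2 then x + 2 else 0)
  else if FN (n+1) f 0 j = none then GN (n+1) (x+1) g j
  else if FN (n+1) f 0 j = some 0 then x + 1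
  else if FN (n+1) f 0 j = some 2 then x + 2
  else 0

def ef' (f : Fin (n+1) × Fin (n+1) → Option (Fin 4)) : Fin n × Fin n → Option (Fin 4) :=
  fun p => FN (n+1) f ((p.1 : ℕ) + 1) (p.2 : ℕ)

end

/-! ### basic lemmas about dm, em and bounds -/

section
variable {x n : ℕ}

lemma dm_le (g' : Fin n → Fin (x+3)) : dm x n g' ≤ n :=
  Nat.find_le (Or.inr rfl)

lemma dm_min (g' : Fin n → Fin (x+3)) {k : ℕ} (hk : k < dm x n g') :
    GN n (x+3) g' k ≤ x ∧ k ≠ n := by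
  have := Nat.find_min (⟨n, Or.inr rfl⟩ : ∃ k, x + 1 ≤ GN n (x+3) g' k ∨ k = n) hk
  push_neg at this; omega

lemma dm_spec (g' : Fin n → Fin (x+3)) (h : dm x n g' < n) :
    x + 1 ≤ GN n (x+3) g' (dm x n g') := by
  unfold dm at h ⊢
  have := Nat.find_spec (⟨n, Or.inr rfl⟩ : ∃ k, x + 1 ≤ GN n (x+3) g' k ∨ k = n)
  rcases this with h1 | h1
  · exact h1
  · omega

lemma dm_eq (g' : Fin n → Fin (x+3)) {m : ℕ}
    (h1 : x + 1 ≤ GN n (x+3) g' m ∨ m = n)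
    (h2 : ∀ k < m, ¬ (x + 1 ≤ GN n (x+3) g' k ∨ k = n)) : dm x n g' = m :=
  (Nat.find_eq_iff _).mpr ⟨h1, h2⟩

lemma em_le (f : Fin (n+1) × Fin (n+1) → Option (Fin 4)) : em n f ≤ n :=
  Nat.find_le (Or.inr rfl)

lemma em_none (f : Fin (n+1) × Fin (n+1) → Option (Fin 4)) {k : ℕ} (hk : k < em n f) :
    FN (n+1) f 0 k = none := by
  have := Nat.find_min (⟨n, Or.inr rfl⟩ : ∃ k, FN (n+1) f 0 k ≠ none ∨ k = n) hk
  push_neg at this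
  exact this.1

lemma em_eq (f : Fin (n+1) × Fin (n+1) → Option (Fin 4)) {m : ℕ}
    (h1 : FN (n+1) f 0 m ≠ none ∨ m = n)
    (h2 : ∀ k < m, FN (n+1) f 0 k = none ∧ k ≠ n) : em n f = m := by
  refine (Nat.find_eq_iff _).mpr ⟨h1, fun k hk h => ?_⟩
  rcases h with h | h
  · exact h (h2 k hk).1
  · exact (h2 k hk).2 h

lemma em_filled {f : Fin (n+1) × Fin (n+1) → Option (Fin 4)}
    (hS : IsStaircase (n+1) f) : FN (n+1) f 0 (em n f) ≠ none := by
  have hdiag := ((isStaircase_iff _ f).mp hS).2.1 0 n (by omega) (by omega) (by omega)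
  have := Nat.find_spec (⟨n, Or.inr rfl⟩ : ∃ k, FN (n+1) f 0 k ≠ none ∨ k = n)
  rcases this with h | h
  · exact h
  · rw [show em n f = n from h]; exact hdiag

/-- for `j ≠ em`, row 0 has no β or δ at `j` -/
lemma no_bd {f : Fin (n+1) × Fin (n+1) → Option (Fin 4)}
    (hS : IsStaircase (n+1) f) {j : ℕ} (hj : j ≠ em n f) :
    FN (n+1) f 0 j ≠ some 1 ∧ FN (n+1) f 0 j ≠ some 3 := by
  constructor <;> intro h
  all_goals {
    have hme : em n f ≤ j := by
      by_contra hc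
      push_neg at hc
      rw [em_none f hc] at h
      cases h
    have hmlt : em n f < j := lt_of_le_of_ne hme (Ne.symm hj)
    have := ((isStaircase_iff _ f).mp hS).2.2.1 0 j (em n f) (by simp [h]) hmlt
    exact em_filled hS this }

/-- when `em < n`, the diagonal box of row 0 holds α or γ -/
lemma em_letter {f : Fin (n+1) × Fin (n+1) → Option (Fin 4)}
    (hS : IsStaircase (n+1) f) (h : em n f < n) :
    FN (n+1) f 0 n = some 0 ∨ FN (n+1) f 0 n = some 2 := by
  have hdiag := ((isStaircase_iff _ f).mp hS).2.1 0 n (by omega) (by omega) (by omega)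
  have hnb := no_bd hS (by omega : (n:ℕ) ≠ em n f)
  rcases hv : FN (n+1) f 0 n with _ | v
  · exact absurd hv hdiag
  · fin_cases v
    · exact Or.inl rfl
    · exact absurd hv hnb.1
    · exact Or.inr rfl
    · exact absurd hv hnb.2

lemma dletter_ne_none (c : ℕ) : dletter x c ≠ none := by
  unfold dletter; split_ifs <;> simp

lemma dgc_lt {c : ℕ} (hc : c < 2 * x + 4) : dgc x c < x + 1 := by
  unfold dgc; split_ifs <;> omega

lemma dg0_lt {c : ℕ} (hc : c < 2 * x + 4) (g' : Fin n → Fin (x+3)) (j : ℕ) :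
    dg0 x n c g' j < x + 1 := by
  unfold dg0; split_ifs with h1 h2 h3
  · exact dgc_lt hc
  all_goals omega

lemma GN_le_x {N : ℕ} (g : Fin N → Fin (x+1)) (j : ℕ) : GN N (x+1) g j ≤ x :=
  Nat.lt_succ_iff.mp (GN_lt (by omega) g j)

lemma ec_lt (f : Fin (n+1) × Fin (n+1) → Option (Fin 4))
    (g : Fin (n+1) → Fin (x+1)) : ec x n f g < 2 * x + 4 := by
  unfold ec
  have := GN_le_x g (em n f)
  split_ifs <;> omega

lemma eh_lt (f : Fin (n+1) × Fin (n+1) → Option (Fin 4))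
    (g : Fin (n+1) → Fin (x+1)) (j : ℕ) : eh x n f g j < x + 3 := by
  unfold eh
  have h1 := GN_le_x g j
  split_ifs <;> omega

/-! ### evaluation lemmas for decode -/

lemma FN_df_pos (c : ℕ) (f' : Fin n × Fin n → Option (Fin 4)) (g' : Fin n → Fin (x+3))
    {i : ℕ} (j : ℕ) (hi : 1 ≤ i) :
    FN (n+1) (df x n c f' g') i j = FN n f' (i-1) j := by
  unfold FN df
  by_cases h : i < n + 1 ∧ j < n + 1
  · rw [dif_pos h]
    simp only []
    rw [if_neg (by omega)]
    rfl
  · rw [dif_neg h]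
    by_cases h2 : i - 1 < n ∧ j < n
    · omega
    · rw [dif_neg h2]

lemma FN_df_zero (c : ℕ) (f' : Fin n × Fin n → Option (Fin 4)) (g' : Fin n → Fin (x+3))
    {j : ℕ} (hj : j < n + 1) :
    FN (n+1) (df x n c f' g') 0 j = drow x n c g' j := by
  unfold FN df
  rw [dif_pos ⟨by omega, hj⟩]
  simp

lemma GN_dg (c : ℕ) (g' : Fin n → Fin (x+3)) (hc : c < 2*x+4) {j : ℕ} (hj : j < n + 1) :
    GN (n+1) (x+1) (fun j => (⟨dg0 x n c g' j, dg0_lt hc g' j⟩ : Fin (x+1))) j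
      = dg0 x n c g' j := by
  unfold GN
  rw [dif_pos hj]

/-! ### drow lemmas -/

lemma drow_lt (c : ℕ) (g' : Fin n → Fin (x+3)) {k : ℕ} (hk : k < dm x n g') :
    drow x n c g' k = none := by
  have h1 := dm_min g' hk
  have h2 := dm_le g'
  unfold drow
  rw [if_neg (by omega), if_neg (by omega), if_pos h1.1]

lemma drow_dm (c : ℕ) (g' : Fin n → Fin (x+3)) :
    drow x n c g' (dm x n g') = dletter x c := by
  unfold drow; rw [if_pos rfl]

lemma drow_dm' (c : ℕ) (g' : Fin n → Fin (x+3)) {k : ℕ} (h : k = dm x n g') :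
    drow x n c g' k = dletter x c := by
  unfold drow; rw [if_pos h]

lemma drow_ne (c : ℕ) (g' : Fin n → Fin (x+3)) {j : ℕ} (hj : j < n) (hjm : j ≠ dm x n g') :
    drow x n c g' j =
      (if GN n (x+3) g' j ≤ x then none
       else if GN n (x+3) g' j = x + 1 then some 0 else some 2) := by
  unfold drow; rw [if_neg hjm, if_neg (by omega)]

lemma drow_n (c : ℕ) (g' : Fin n → Fin (x+3)) (h : dm x n g' < n) :
    drow x n c g' n =
      (if GN n (x+3) g' (dm x n g') = x + 1 then some 0 else some 2) := by
  unfold drow; rw [if_neg (by omega), if_pos rfl]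

lemma dletter_ag {c : ℕ} (h : dletter x c = some 0 ∨ dletter x c = some 2) : c ≤ 1 := by
  unfold dletter at h
  split_ifs at h <;> first | omega | (rcases h with h | h <;> simp at h)

lemma drow_bd (c : ℕ) (g' : Fin n → Fin (x+3)) {j : ℕ} (hj : j ≤ n)
    (h : drow x n c g' j = some 1 ∨ drow x n c g' j = some 3) : j = dm x n g' := by
  by_contra hjm
  rcases eq_or_lt_of_le hj with rfl | hjn
  · rw [drow_n c g' (lt_of_le_of_ne (dm_le g') (Ne.symm hjm))] at h
    split_ifs at h <;> rcases h with h | h <;> simp at h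
  · rw [drow_ne c g' hjn hjm] at h
    split_ifs at h <;> rcases h with h | h <;> simp at h

/-! ### decode is well-defined -/

theorem dec_ok {c : ℕ} (hc : c < 2*x+4) {f' : Fin n × Fin n → Option (Fin 4)}
    {g' : Fin n → Fin (x+3)} (hok : OK (x+3) n (f', g')) :
    OK (x+1) (n+1) (df x n c f' g',
      fun j => (⟨dg0 x n c g' ((j : Fin (n+1)) : ℕ), dg0_lt hc g' _⟩ : Fin (x+1))) := by
  obtain ⟨hS', hcol'⟩ := hok
  rw [isStaircase_iff] at hS'
  obtain ⟨h1, h2, h3, h4⟩ := hS'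
  rw [okcol_iff] at hcol'
  simp only [] at h1 h2 h3 h4 hcol'
  have hmn : dm x n g' ≤ n := dm_le g'
  constructor
  · show IsStaircase (n+1) (df x n c f' g')
    rw [isStaircase_iff]
    refine ⟨fun i j hij => ?_, fun i j hi hj hij => ?_, fun i j j' hl hj' => ?_,
      fun i j i' hl hi' => ?_⟩
    · -- out of range
      rcases Nat.eq_zero_or_pos i with rfl | hi
      · unfold FN; rw [dif_neg (by omega)]
      · rw [FN_df_pos c f' g' j hi]
        exact h1 _ _ (by omega)
    · -- diagonal filled
      rcases Nat.eq_zero_or_pos i with rfl | hipos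
      · have hj : j = n := by omega
        rw [hj, FN_df_zero c f' g' (by omega)]
        rcases eq_or_lt_of_le hmn with hmeq | hmlt
        · unfold drow
          rw [if_pos hmeq.symm]
          exact dletter_ne_none c
        · rw [drow_n c g' hmlt]
          split_ifs <;> simp
      · rw [FN_df_pos c f' g' j hipos]
        exact h2 (i-1) j (by omega) (by omega) (by omega)
    · -- β/δ row condition
      have hb : i < n + 1 ∧ j < n + 1 := by
        rcases hl with hl | hl <;> exact FN_bounds' _ hl
      rcases Nat.eq_zero_or_pos i with rfl | hipos
      · rw [FN_df_zero c f' g' hb.2] at hl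
        have hjm : j = dm x n g' := drow_bd c g' (by omega) hl
        rw [FN_df_zero c f' g' (by omega)]
        exact drow_lt c g' (by omega)
      · rw [FN_df_pos c f' g' j hipos] at hl
        rw [FN_df_pos c f' g' j' hipos]
        exact h3 (i-1) j j' hl hj'
    · -- α/γ column condition
      have hb : i < n + 1 ∧ j < n + 1 := by
        rcases hl with hl | hl <;> exact FN_bounds' _ hl
      rcases Nat.eq_zero_or_pos i with rfl | hipos
      · exact absurd hi' (by omega)
      · rw [FN_df_pos c f' g' j hipos] at hl
        have hjn : j < n := by
          rcases hl with hl | hl <;> exact (FN_bounds' _ hl).2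
        rcases Nat.eq_zero_or_pos i' with rfl | hi'pos
        · rw [FN_df_zero c f' g' hb.2]
          have hg0 : GN n (x+3) g' j = 0 := hcol' (i-1) j hl
          have hjm : j ≠ dm x n g' := by
            intro hjm
            have h5 := dm_spec g' (by omega)
            rw [← hjm] at h5
            omega
          rw [drow_ne c g' hjn hjm, if_pos (by omega)]
        · rw [FN_df_pos c f' g' j hi'pos]
          exact h4 (i-1) j (i'-1) hl (by omega)
  · rw [okcol_iff]
    simp only []
    intro i j hl
    have hb : i < n + 1 ∧ j < n + 1 := by
      rcases hl with hl | hl <;> exact FN_bounds' _ hl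
    rw [GN_dg c g' hc hb.2]
    rcases Nat.eq_zero_or_pos i with rfl | hipos
    · rw [FN_df_zero c f' g' hb.2] at hl
      by_cases hjm : j = dm x n g'
      · subst hjm
        rw [drow_dm] at hl
        have hc1 := dletter_ag hl
        unfold dg0
        rw [if_pos rfl]
        unfold dgc; rw [if_pos hc1]
      · by_cases hjn : j = n
        · unfold dg0; rw [if_neg hjm, if_pos hjn]
        · have hjn' : j < n := by omega
          rw [drow_ne c g' hjn' hjm] at hl
          split_ifs at hl with hx1 hx2
          · rcases hl with hl | hl <;> simp at hl
          · unfold dg0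
            rw [if_neg hjm, if_neg hjn, if_neg (by omega)]
          · unfold dg0
            rw [if_neg hjm, if_neg hjn, if_neg (by omega)]
    · rw [FN_df_pos c f' g' j hipos] at hl
      have hjn : j < n := by
        rcases hl with hl | hl <;> exact (FN_bounds' _ hl).2
      have hg0 : GN n (x+3) g' j = 0 := hcol' (i-1) j hl
      have hjm : j ≠ dm x n g' := by
        intro hjm
        have h5 := dm_spec g' (by omega)
        rw [← hjm] at h5
        omega
      unfold dg0
      rw [if_neg hjm, if_neg (by omega), if_pos (by omega)]
      omega

/-! ### encode is well-defined -/

lemma FN_ef_in (f : Fin (n+1) × Fin (n+1) → Option (Fin 4)) {i j : ℕ}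
    (hi : i < n) (hj : j < n) : FN n (ef' n f) i j = FN (n+1) f (i+1) j := by
  unfold FN ef'
  rw [dif_pos ⟨hi, hj⟩]
  simp [FN, hj, Nat.lt_succ_of_lt hj]

lemma FN_ef_out (f : Fin (n+1) × Fin (n+1) → Option (Fin 4)) {i j : ℕ}
    (h : ¬(i < n ∧ j < n)) : FN n (ef' n f) i j = none := by
  unfold FN
  rw [dif_neg h]

lemma GN_eh (f : Fin (n+1) × Fin (n+1) → Option (Fin 4)) (g : Fin (n+1) → Fin (x+1))
    {j : ℕ} (hj : j < n) :
    GN n (x+3) (fun j => (⟨eh x n f g ((j : Fin n) : ℕ), eh_lt f g _⟩ : Fin (x+3))) j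
      = eh x n f g j := by
  unfold GN
  rw [dif_pos hj]

theorem enc_ok {f : Fin (n+1) × Fin (n+1) → Option (Fin 4)} {g : Fin (n+1) → Fin (x+1)}
    (hok : OK (x+1) (n+1) (f, g)) :
    OK (x+3) n (ef' n f,
      fun j => (⟨eh x n f g ((j : Fin n) : ℕ), eh_lt f g _⟩ : Fin (x+3))) := by
  obtain ⟨hS, hcol⟩ := hok
  have hS' := hS
  rw [isStaircase_iff] at hS'
  obtain ⟨h1, h2, h3, h4⟩ := hS'
  rw [okcol_iff] at hcol
  simp only [] at h1 h2 h3 h4 hcol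
  constructor
  · show IsStaircase n (ef' n f)
    rw [isStaircase_iff]
    refine ⟨fun i j hij => ?_, fun i j hi hj hij => ?_, fun i j j' hl hj' => ?_,
      fun i j i' hl hi' => ?_⟩
    · by_cases h : i < n ∧ j < n
      · rw [FN_ef_in f h.1 h.2]
        exact h1 _ _ (by omega)
      · exact FN_ef_out f h
    · rw [FN_ef_in f hi hj]
      exact h2 (i+1) j (by omega) (by omega) (by omega)
    · have hb : i < n ∧ j < n := by
        rcases hl with hl | hl <;> exact FN_bounds' _ hl
      rw [FN_ef_in f hb.1 hb.2] at hl
      rw [FN_ef_in f hb.1 (by omega)]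
      exact h3 (i+1) j j' hl hj'
    · have hb : i < n ∧ j < n := by
        rcases hl with hl | hl <;> exact FN_bounds' _ hl
      rw [FN_ef_in f hb.1 hb.2] at hl
      rw [FN_ef_in f (by omega) hb.2]
      exact h4 (i+1) j (i'+1) hl (by omega)
  · rw [okcol_iff]
    simp only []
    intro i j hl
    have hb : i < n ∧ j < n := by
      rcases hl with hl | hl <;> exact FN_bounds' _ hl
    rw [FN_ef_in f hb.1 hb.2] at hl
    rw [GN_eh f g hb.2]
    have hrow0 : FN (n+1) f 0 j = none := h4 (i+1) j 0 hl (by omega)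
    have hjem : j ≠ em n f := by
      intro hje
      rw [hje] at hrow0
      exact em_filled hS hrow0
    have hg : GN (n+1) (x+1) g j = 0 := hcol (i+1) j hl
    unfold eh
    rw [if_neg hjem, hrow0]
    exact hg

/-! ### the encoding and decoding maps -/

def dec (q : Fin (2*x+4) × GS (x+3) n) : GS (x+1) (n+1) :=
  ⟨(df x n (q.1 : ℕ) q.2.1.1 q.2.1.2,
    fun j => ⟨dg0 x n (q.1 : ℕ) q.2.1.2 (j : ℕ), dg0_lt q.1.2 _ _⟩),
   dec_ok q.1.2 q.2.2⟩

def enc (T : GS (x+1) (n+1)) : Fin (2*x+4) × GS (x+3) n :=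
  (⟨ec x n T.1.1 T.1.2, ec_lt T.1.1 T.1.2⟩,
   ⟨(ef' n T.1.1, fun j => ⟨eh x n T.1.1 T.1.2 (j : ℕ), eh_lt T.1.1 T.1.2 _⟩),
    enc_ok T.2⟩)

/-- the decode-side special position of the encoded data equals `em` -/
lemma dm_eh {f : Fin (n+1) × Fin (n+1) → Option (Fin 4)} {g : Fin (n+1) → Fin (x+1)}
    (hS : IsStaircase (n+1) f) :
    dm x n (fun j => (⟨eh x n f g ((j : Fin n) : ℕ), eh_lt f g _⟩ : Fin (x+3))) = em n f := by
  apply dm_eq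
  · rcases eq_or_lt_of_le (em_le f) with he | he
    · exact Or.inr he
    · left
      rw [GN_eh f g he]
      unfold eh
      rw [if_pos rfl]
      rcases em_letter hS he with h | h <;> rw [h] <;> split_ifs <;> simp_all
  · intro k hk
    push_neg
    have hkn : k < n := lt_of_lt_of_le hk (em_le f)
    constructor
    · rw [GN_eh f g hkn]
      unfold eh
      rw [if_neg (by omega), if_pos (em_none f hk)]
      have := GN_le_x g k
      omega
    · omega

theorem dec_enc (T : GS (x+1) (n+1)) : dec (enc T) = T := by
  obtain ⟨⟨f, g⟩, hok⟩ := T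
  have hS := hok.1
  have hcol := (okcol_iff (n+1) (x+1) f g).mp hok.2
  apply Subtype.ext
  simp only [dec, enc]
  have hdm : dm x n (fun j : Fin n => (⟨eh x n f g (j : ℕ), eh_lt f g _⟩ : Fin (x+3)))
      = em n f := dm_eh hS
  have hGb : ∀ k : ℕ, k < n →
      GN n (x+3) (fun j : Fin n => (⟨eh x n f g (j : ℕ), eh_lt f g _⟩ : Fin (x+3))) k
        = eh x n f g k := fun k hk => GN_eh f g hk
  have hfill := em_filled hS
  have hemle := em_le f
  refine Prod.ext ?_ ?_
  · -- tableau components agree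
    show df x n (ec x n f g) (ef' n f) _ = f
    apply funext_of_FN
    intro i j
    rcases Nat.eq_zero_or_pos i with rfl | hipos
    · -- row 0
      by_cases hj : j < n + 1
      · rw [FN_df_zero]
        swap; · exact hj
        by_cases hjm : j = em n f
        · -- the special box
          subst hjm
          rw [drow_dm' _ _ hdm.symm]
          have hgle := GN_le_x g (em n f)
          rcases ofin4 (FN (n+1) f 0 (em n f)) with hv | hv | hv | hv | hv
          · exact absurd hv hfill
          · rw [hv, show ec x n f g = 0 from by unfold ec; rw [if_pos hv]]
            unfold dletter; rw [if_pos rfl]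
          · rw [hv, show ec x n f g = 2 + GN (n+1) (x+1) g (em n f) from by
              unfold ec; rw [if_neg (by simp [hv]), if_neg (by simp [hv]), if_pos hv]]
            unfold dletter
            rw [if_neg (by omega), if_neg (by omega), if_pos (by omega)]
          · rw [hv, show ec x n f g = 1 from by
              unfold ec; rw [if_neg (by simp [hv]), if_pos hv]]
            unfold dletter; rw [if_neg (by omega), if_pos rfl]
          · rw [hv, show ec x n f g = x + 3 + GN (n+1) (x+1) g (em n f) from by
              unfold ec
              rw [if_neg (by simp [hv]), if_neg (by simp [hv]), if_neg (by simp [hv]),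
                if_pos hv]]
            unfold dletter
            rw [if_neg (by omega), if_neg (by omega), if_neg (by omega)]
        · by_cases hjn : j = n
          · -- the diagonal box of row 0, when not special
            have hmlt : em n f < n := by omega
            rw [hjn, drow_n]
            swap; · rw [hdm]; exact hmlt
            rw [hdm, hGb _ hmlt]
            have heq : eh x n f g (em n f)
                = (if FN (n+1) f 0 n = some 0 then x + 1
                   else if FN (n+1) f 0 n = some 2 then x + 2 else 0) := by
              unfold eh; rw [if_pos rfl]
            rw [heq]
            rcases em_letter hS hmlt with h | h <;> rw [h] <;> simp
          · -- an ordinary box of row 0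
            have hjn' : j < n := by omega
            rw [drow_ne]
            rotate_left
            · exact hjn'
            · rw [hdm]; exact hjm
            rw [hGb _ hjn']
            have hnb := no_bd hS hjm
            rcases ofin4 (FN (n+1) f 0 j) with hv | hv | hv | hv | hv
            · have heq : eh x n f g j = GN (n+1) (x+1) g j := by
                unfold eh; rw [if_neg hjm, if_pos hv]
              rw [heq, if_pos (GN_le_x g j), hv]
            · have heq : eh x n f g j = x + 1 := by
                unfold eh; rw [if_neg hjm, if_neg (by simp [hv]), if_pos hv]
              rw [heq, if_neg (by omega), if_pos rfl, hv]
            · exact absurd hv hnb.1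
            · have heq : eh x n f g j = x + 2 := by
                unfold eh
                rw [if_neg hjm, if_neg (by simp [hv]), if_neg (by simp [hv]), if_pos hv]
              rw [heq, if_neg (by omega), if_neg (by omega), hv]
            · exact absurd hv hnb.2
      · -- out of range
        unfold FN
        rw [dif_neg (by omega), dif_neg (by omega)]
    · -- rows ≥ 1
      rw [FN_df_pos]
      swap; · exact hipos
      by_cases hb : i - 1 < n ∧ j < n
      · rw [FN_ef_in f hb.1 hb.2]
        congr 1
        omega
      · rw [FN_ef_out f hb]
        by_cases hb2 : i < n + 1 ∧ j < n + 1
        · symm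
          exact ((isStaircase_iff _ f).mp hS).1 i j (by omega)
        · unfold FN; rw [dif_neg hb2]
  · -- label components agree
    show _ = g
    apply funext_of_GN
    intro j
    by_cases hj : j < n + 1
    · rw [GN_dg _ _ (ec_lt f g) hj]
      by_cases hjm : j = em n f
      · subst hjm
        unfold dg0
        rw [if_pos hdm.symm]
        have hgle := GN_le_x g (em n f)
        rcases ofin4 (FN (n+1) f 0 (em n f)) with hv | hv | hv | hv | hv
        · exact absurd hv hfill
        · rw [show ec x n f g = 0 from by unfold ec; rw [if_pos hv]]
          unfold dgc
          rw [if_pos (by omega)]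
          exact (hcol 0 (em n f) (Or.inl hv)).symm
        · rw [show ec x n f g = 2 + GN (n+1) (x+1) g (em n f) from by
            unfold ec; rw [if_neg (by simp [hv]), if_neg (by simp [hv]), if_pos hv]]
          unfold dgc
          rw [if_neg (by omega), if_pos (by omega)]
          omega
        · rw [show ec x n f g = 1 from by
            unfold ec; rw [if_neg (by simp [hv]), if_pos hv]]
          unfold dgc
          rw [if_pos (by omega)]
          exact (hcol 0 (em n f) (Or.inr hv)).symm
        · rw [show ec x n f g = x + 3 + GN (n+1) (x+1) g (em n f) from by
            unfold ec
            rw [if_neg (by simp [hv]), if_neg (by simp [hv]), if_neg (by simp [hv]),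
              if_pos hv]]
          unfold dgc
          rw [if_neg (by omega), if_neg (by omega)]
          omega
      · by_cases hjn : j = n
        · have hmlt : em n f < n := by omega
          rw [hjn]
          unfold dg0
          rw [if_neg (by rw [hdm]; omega), if_pos rfl]
          rcases em_letter hS hmlt with h | h
          · exact (hcol 0 n (Or.inl h)).symm
          · exact (hcol 0 n (Or.inr h)).symm
        · have hjn' : j < n := by omega
          unfold dg0
          rw [if_neg (by rw [hdm]; exact hjm), if_neg hjn]
          rw [hGb _ hjn']
          have hnb := no_bd hS hjm
          rcases ofin4 (FN (n+1) f 0 j) with hv | hv | hv | hv | hv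
          · have heq : eh x n f g j = GN (n+1) (x+1) g j := by
              unfold eh; rw [if_neg hjm, if_pos hv]
            rw [heq, if_pos (GN_le_x g j)]
          · have heq : eh x n f g j = x + 1 := by
              unfold eh; rw [if_neg hjm, if_neg (by simp [hv]), if_pos hv]
            rw [heq, if_neg (by omega)]
            exact (hcol 0 j (Or.inl hv)).symm
          · exact absurd hv hnb.1
          · have heq : eh x n f g j = x + 2 := by
              unfold eh
              rw [if_neg hjm, if_neg (by simp [hv]), if_neg (by simp [hv]), if_pos hv]
            rw [heq, if_neg (by omega)]
            exact (hcol 0 j (Or.inr hv)).symm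
          · exact absurd hv hnb.2
    · unfold GN
      rw [dif_neg hj, dif_neg hj]

theorem enc_dec (q : Fin (2*x+4) × GS (x+3) n) : enc (dec q) = q := by
  obtain ⟨c, ⟨⟨f', g'⟩, hok⟩⟩ := q
  have hc := c.2
  have hmn := dm_le g'
  have hem : em n (df x n (c : ℕ) f' g') = dm x n g' := by
    apply em_eq
    · left
      rw [FN_df_zero _ _ _ (by omega), drow_dm]
      exact dletter_ne_none _
    · intro k hk
      refine ⟨?_, by omega⟩
      rw [FN_df_zero _ _ _ (by omega)]
      exact drow_lt _ _ hk
  simp only [enc, dec]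
  refine Prod.ext ?_ ?_
  · -- the letter-code component
    refine Fin.ext ?_
    show ec x n (df x n (c : ℕ) f' g') _ = (c : ℕ)
    unfold ec
    rw [hem, FN_df_zero _ _ _ (by omega), drow_dm, GN_dg _ _ c.2 (by omega)]
    have hdg : dg0 x n (c : ℕ) g' (dm x n g') = dgc x (c : ℕ) := by
      unfold dg0; rw [if_pos rfl]
    rw [hdg]
    rcases show (c:ℕ) = 0 ∨ (c:ℕ) = 1 ∨ (2 ≤ (c:ℕ) ∧ (c:ℕ) < x+3) ∨ (x+3 ≤ (c:ℕ))
      from by omega with h | h | h | h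
    · rw [show dletter x (c:ℕ) = some 0 from by unfold dletter; rw [if_pos h]]
      simp; omega
    · rw [show dletter x (c:ℕ) = some 2 from by
        unfold dletter; rw [if_neg (by omega), if_pos h]]
      simp; omega
    · rw [show dletter x (c:ℕ) = some 1 from by
        unfold dletter; rw [if_neg (by omega), if_neg (by omega), if_pos h.2]]
      simp
      unfold dgc
      rw [if_neg (by omega), if_pos h.2]
      omega
    · rw [show dletter x (c:ℕ) = some 3 from by
        unfold dletter; rw [if_neg (by omega), if_neg (by omega), if_neg (by omega)]]
      simp
      unfold dgc
      rw [if_neg (by omega), if_neg (by omega)]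
      omega
  · -- the size-n data component
    apply Subtype.ext
    refine Prod.ext ?_ ?_
    · -- tableaux agree
      show ef' n (df x n (c : ℕ) f' g') = f'
      apply funext_of_FN
      intro i j
      by_cases hb : i < n ∧ j < n
      · rw [FN_ef_in _ hb.1 hb.2, FN_df_pos _ _ _ _ (by omega)]
        congr 1
      · rw [FN_ef_out _ hb]
        symm
        unfold FN
        rw [dif_neg hb]
    · -- labels agree
      show _ = g'
      apply funext_of_GN
      intro j
      by_cases hj : j < n
      · rw [GN_eh _ _ hj]
        by_cases hjm : j = dm x n g'
        · subst hjm
          have hmlt : dm x n g' < n := hj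
          have hspec := dm_spec g' hmlt
          have hlt3 := GN_lt (show 0 < x+3 by omega) g' (dm x n g')
          unfold eh
          rw [if_pos hem.symm, FN_df_zero _ _ _ (by omega), drow_n _ _ hmlt]
          by_cases hx1 : GN n (x+3) g' (dm x n g') = x + 1
          · rw [if_pos hx1]
            simp
            omega
          · rw [if_neg hx1]
            simp
            omega
        · unfold eh
          rw [if_neg (by rw [hem]; exact hjm)]
          rw [FN_df_zero _ _ _ (by omega), drow_ne _ _ hj hjm]
          have hlt3 := GN_lt (show 0 < x+3 by omega) g' j
          by_cases hle : GN n (x+3) g' j ≤ x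
          · rw [if_pos hle, if_pos rfl, GN_dg _ _ c.2 (by omega)]
            unfold dg0
            rw [if_neg hjm, if_neg (by omega), if_pos hle]
          · by_cases hx1 : GN n (x+3) g' j = x + 1
            · rw [if_neg hle, if_pos hx1]
              simp
              omega
            · rw [if_neg hle, if_neg hx1]
              simp
              omega
      · unfold GN
        rw [dif_neg hj, dif_neg hj]

/-- The key equivalence: weighted staircase tableaux of size `n+1` with weight `x+1`
correspond to a choice among `2x+4` together with weighted tableaux of size `n`
with weight `x+3`. -/
def stepEquiv : GS (x+1) (n+1) ≃ Fin (2*x+4) × GS (x+3) n where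
  toFun := enc
  invFun := dec
  left_inv := dec_enc
  right_inv := enc_dec

end

lemma card_GS (n : ℕ) : ∀ x : ℕ,
    Fintype.card (GS (x+1) n) = ∏ i ∈ Finset.range n, (2*x + 4*i + 4) := by
  induction n with
  | zero =>
    intro x
    rw [Finset.prod_range_zero]
    rw [Fintype.card_eq_one_iff]
    refine ⟨⟨(fun p => none, fun j => j.elim0), ?_⟩, ?_⟩
    · exact ⟨⟨fun p => p.1.elim0, fun p => p.1.elim0, fun p => p.1.elim0, fun p => p.1.elim0⟩,
        fun j => j.elim0⟩
    · rintro ⟨⟨f, g⟩, h⟩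
      apply Subtype.ext
      refine Prod.ext ?_ ?_
      · funext p; exact p.1.elim0
      · funext j; exact j.elim0
  | succ n ih =>
    intro x
    rw [Fintype.card_congr (stepEquiv (x := x) (n := n)), Fintype.card_prod, Fintype.card_fin]
    have h3 : Fintype.card (GS (x+3) n) = ∏ i ∈ Finset.range n, (2*(x+2) + 4*i + 4) := ih (x+2)
    rw [h3, Finset.prod_range_succ']
    have hP : ∏ i ∈ Finset.range n, (2*(x+2) + 4*i + 4)
        = ∏ i ∈ Finset.range n, (2*x + 4*(i+1) + 4) := by
      apply Finset.prod_congr rfl; intro i _; ring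
    rw [hP, mul_comm]

lemma card_GS_one (n : ℕ) :
    Fintype.card {f : Fin n × Fin n → Option (Fin 4) // IsStaircase n f}
      = Fintype.card (GS 1 n) := by
  apply Fintype.card_congr
  refine ⟨fun T => ⟨(T.1, fun _ => 0), T.2, fun j _ => rfl⟩, fun p => ⟨p.1.1, p.2.1⟩, ?_, ?_⟩
  · intro T; rfl
  · rintro ⟨⟨f, g⟩, h⟩
    apply Subtype.ext
    refine Prod.ext rfl ?_
    funext j
    exact Subsingleton.elim _ _

end SP

/-- The number of staircase tableaux of size `n` is `4^n · n!`. -/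
theorem card_staircase (n : ℕ) :
    Fintype.card {f : Fin n × Fin n → Option (Fin 4) // IsStaircase n f} =
      4 ^ n * Nat.factorial n := by
  rw [SP.card_GS_one n, show (1 : ℕ) = 0 + 1 from rfl, SP.card_GS n 0]
  induction n with
  | zero => simp
  | succ n ih =>
    rw [Finset.prod_range_succ, ih, pow_succ, Nat.factorial_succ]
    ring
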